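/- For ε > 0 and any continuous 2π-periodic function f, the convolution (A_ε * f)(x) = ∑_{j ∈ ℤ} \hat{f}(j) e^{ijx} / cosh(εj) (where \hat{f}(j) are the Fourier coefficients of f) extends to a function holomorphic in the strip {z ∈ ℂ : |Im z| < ε}; in particular A_ε * f is real-analytic on ℝ. -/

import Mathlib

open Real

/-- The kernel `A_ε(x) = (1/(2π)) ∑_{j ∈ ℤ} e^{ijx}/cosh(εj)`. -/
noncomputable def Aker (ε x : ℝ) : ℂ :=
  (1/(2*π : ℂ)) * ∑' j : ℤ, Complex.exp (Complex.I * j * x) / (Real.cosh (ε * j) : ℂ)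

lemma summable_exp_neg_mul_abs_int {r : ℝ} (hr : 0 < r) :
    Summable (fun j : ℤ => Real.exp (-r * |(j:ℝ)|)) := by
  have hnat : Summable (fun n : ℕ => Real.exp (-r * n)) := by
    have h : ∀ n : ℕ, Real.exp (-r * n) = (Real.exp (-r))^n := by
      intro n; rw [← Real.exp_nat_mul]; ring_nf
    simp only [h]
    exact summable_geometric_of_lt_one (Real.exp_nonneg _) (Real.exp_lt_one_iff.mpr (by linarith))
  apply Summable.of_nat_of_neg <;> · apply hnat.congr; intro n; push_cast; simp

lemma exp_abs_le_two_cosh (x : ℝ) : Real.exp |x| ≤ 2 * Real.cosh x := by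
  rw [Real.cosh_eq]
  rcases abs_cases x with ⟨h, _⟩ | ⟨h, _⟩ <;> rw [h] <;>
    nlinarith [Real.exp_nonneg x, Real.exp_nonneg (-x)]

lemma norm_exp_I_int_real (j : ℤ) (x : ℝ) : ‖Complex.exp (Complex.I * j * x)‖ = 1 := by
  rw [Complex.norm_exp]
  simp [Complex.mul_re]

lemma norm_exp_I_int (j : ℤ) (z : ℂ) :
    ‖Complex.exp (Complex.I * j * z)‖ = Real.exp (-(j:ℝ) * z.im) := by
  rw [Complex.norm_exp]
  congr 1
  simp [Complex.mul_re, Complex.mul_im]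

lemma summable_inv_cosh {ε : ℝ} (hε : 0 < ε) :
    Summable (fun j : ℤ => (Real.cosh (ε * j))⁻¹) := by
  apply Summable.of_nonneg_of_le (fun j => by positivity)
    (fun j => ?_) ((summable_exp_neg_mul_abs_int hε).mul_left 2)
  have h2 : (0:ℝ) < Real.cosh (ε * j) := Real.cosh_pos _
  have h3 : (0:ℝ) < Real.exp (ε * |(j:ℝ)|) := Real.exp_pos _
  have h1 : Real.exp (ε * |(j:ℝ)|) ≤ 2 * Real.cosh (ε * j) := by
    have := exp_abs_le_two_cosh (ε * j)
    rwa [abs_mul, abs_of_pos hε] at this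
  have he : Real.exp (-ε * |(j:ℝ)|) = (Real.exp (ε * |(j:ℝ)|))⁻¹ := by
    rw [← Real.exp_neg]; ring_nf
  rw [he]
  calc (Real.cosh (ε * j))⁻¹
      = ((Real.cosh (ε * j))⁻¹ * Real.exp (ε * |(j:ℝ)|)) * (Real.exp (ε * |(j:ℝ)|))⁻¹ := by
        field_simp
    _ ≤ ((Real.cosh (ε * j))⁻¹ * (2 * Real.cosh (ε * j))) * (Real.exp (ε * |(j:ℝ)|))⁻¹ := by
        gcongr
    _ = 2 * (Real.exp (ε * |(j:ℝ)|))⁻¹ := by field_simp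

lemma inv_cosh_le {ε : ℝ} (hε : 0 < ε) (j : ℤ) :
    (Real.cosh (ε * j))⁻¹ ≤ 2 * Real.exp (-ε * |(j:ℝ)|) := by
  have h2 : (0:ℝ) < Real.cosh (ε * j) := Real.cosh_pos _
  have h3 : (0:ℝ) < Real.exp (ε * |(j:ℝ)|) := Real.exp_pos _
  have h1 : Real.exp (ε * |(j:ℝ)|) ≤ 2 * Real.cosh (ε * j) := by
    have := exp_abs_le_two_cosh (ε * j)
    rwa [abs_mul, abs_of_pos hε] at this
  have he : Real.exp (-ε * |(j:ℝ)|) = (Real.exp (ε * |(j:ℝ)|))⁻¹ := by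
    rw [← Real.exp_neg]; ring_nf
  rw [he]
  calc (Real.cosh (ε * j))⁻¹
      = ((Real.cosh (ε * j))⁻¹ * Real.exp (ε * |(j:ℝ)|)) * (Real.exp (ε * |(j:ℝ)|))⁻¹ := by
        field_simp
    _ ≤ ((Real.cosh (ε * j))⁻¹ * (2 * Real.cosh (ε * j))) * (Real.exp (ε * |(j:ℝ)|))⁻¹ := by
        gcongr
    _ = 2 * (Real.exp (ε * |(j:ℝ)|))⁻¹ := by field_simp

lemma norm_exp_neg_I_int_real (j : ℤ) (t : ℝ) : ‖Complex.exp (-Complex.I * j * t)‖ = 1 := by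
  rw [Complex.norm_exp]
  simp [Complex.mul_re]

theorem stmt6 (ε : ℝ) (hε : 0 < ε) (f : ℝ → ℝ) (hf : Continuous f)
    (hfp : Function.Periodic f (2*π)) :
    (∀ x : ℝ, (∫ t in (0:ℝ)..(2*π), Aker ε (x - t) * (f t : ℂ)) =
      ∑' j : ℤ, ((1/(2*π : ℂ)) * ∫ t in (0:ℝ)..(2*π), (f t : ℂ) * Complex.exp (-Complex.I * j * t)) *
        Complex.exp (Complex.I * j * x) / (Real.cosh (ε * j) : ℂ)) ∧
    ∃ F : ℂ → ℂ, DifferentiableOn ℂ F {z : ℂ | |z.im| < ε} ∧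
      (∀ x : ℝ, F x = ∫ t in (0:ℝ)..(2*π), Aker ε (x - t) * (f t : ℂ)) ∧
      ∀ x : ℝ, AnalyticAt ℝ (fun y : ℝ => F y) x := by
  have hπ : (0:ℝ) < 2*π := by positivity
  have hcosh0 : ∀ j : ℤ, ((Real.cosh (ε * j) : ℂ)) ≠ 0 := fun j =>
    Complex.ofReal_ne_zero.mpr (Real.cosh_pos _).ne'
  have h2π0 : (2*π : ℂ) ≠ 0 := by
    simp only [ne_eq, mul_eq_zero, not_or]
    exact ⟨two_ne_zero, Complex.ofReal_ne_zero.mpr Real.pi_ne_zero⟩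
  -- the Fourier coefficients
  set c : ℤ → ℂ := fun j =>
    (1/(2*π : ℂ)) * ∫ t in (0:ℝ)..(2*π), (f t : ℂ) * Complex.exp (-Complex.I * j * t) with hc
  -- summability of the kernel series at any real point
  have hksum : ∀ y : ℝ, Summable (fun j : ℤ =>
      Complex.exp (Complex.I * j * y) / (Real.cosh (ε * j) : ℂ)) := by
    intro y
    apply Summable.of_norm
    apply Summable.congr (summable_inv_cosh hε)
    intro j
    rw [norm_div, norm_exp_I_int_real, Complex.norm_real, Real.norm_eq_abs,
      abs_of_pos (Real.cosh_pos _), one_div]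
  -- Part 1
  have part1 : ∀ x : ℝ, (∫ t in (0:ℝ)..(2*π), Aker ε (x - t) * (f t : ℂ)) =
      ∑' j : ℤ, c j * Complex.exp (Complex.I * j * x) / (Real.cosh (ε * j) : ℂ) := by
    intro x
    have hterm : HasSum
        (fun j : ℤ => ∫ t in (0:ℝ)..(2*π),
          (1/(2*π : ℂ)) * (Complex.exp (Complex.I * j * (x - t : ℝ)) / (Real.cosh (ε * j) : ℂ))
            * (f t : ℂ))
        (∫ t in (0:ℝ)..(2*π), Aker ε (x - t) * (f t : ℂ)) := by
      refine intervalIntegral.hasSum_integral_of_dominated_convergence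
        (fun j t => (2*π)⁻¹ * (Real.cosh (ε * j))⁻¹ * |f t|)
        (fun j => ?_) (fun j => ?_) ?_ ?_ ?_
      · exact Continuous.aestronglyMeasurable (by fun_prop)
      · filter_upwards with t ht
        have : ‖(1/(2*π : ℂ)) * (Complex.exp (Complex.I * j * (x - t : ℝ)) / (Real.cosh (ε * j) : ℂ))
            * (f t : ℂ)‖ = (2*π)⁻¹ * (Real.cosh (ε * j))⁻¹ * |f t| := by
          simp only [norm_mul, norm_div, norm_one, Complex.norm_real, Real.norm_eq_abs,
            norm_exp_I_int_real, Complex.norm_ofNat]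
          rw [abs_of_pos Real.pi_pos, abs_of_pos (Real.cosh_pos _)]
          ring
        exact le_of_eq this
      · filter_upwards with t ht
        exact Summable.mul_right _ (Summable.mul_left _ (summable_inv_cosh hε))
      · have heq : (fun t : ℝ => ∑' j : ℤ, (2*π)⁻¹ * (Real.cosh (ε * j))⁻¹ * |f t|)
            = fun t : ℝ => (∑' j : ℤ, (2*π)⁻¹ * (Real.cosh (ε * j))⁻¹) * |f t| :=
          funext fun t => tsum_mul_right
        rw [heq]
        exact Continuous.intervalIntegrable (by fun_prop) _ _
      · filter_upwards with t ht
        have h0 := ((hksum (x - t)).hasSum.mul_left (1/(2*π : ℂ))).mul_right (f t : ℂ)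
        exact h0
    rw [← hterm.tsum_eq]
    refine tsum_congr fun j => ?_
    have hsplit : ∀ t : ℝ,
        (1/(2*π : ℂ)) * (Complex.exp (Complex.I * j * (x - t : ℝ)) / (Real.cosh (ε * j) : ℂ))
          * (f t : ℂ)
        = (Complex.exp (Complex.I * j * x) / ((2*π : ℂ) * (Real.cosh (ε * j) : ℂ)))
          * ((f t : ℂ) * Complex.exp (-Complex.I * j * t)) := by
      intro t
      have hexp : Complex.exp (Complex.I * j * (x - t : ℝ))
          = Complex.exp (Complex.I * j * x) * Complex.exp (-Complex.I * j * t) := by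
        rw [← Complex.exp_add]
        congr 1
        push_cast
        ring
      rw [hexp]
      field_simp
    rw [intervalIntegral.integral_congr (g := fun t =>
        (Complex.exp (Complex.I * j * x) / ((2*π : ℂ) * (Real.cosh (ε * j) : ℂ)))
          * ((f t : ℂ) * Complex.exp (-Complex.I * j * t))) (fun t _ => hsplit t),
      intervalIntegral.integral_const_mul, hc]
    field_simp
  -- bound on the Fourier coefficients
  have hn2π : ‖(1/(2*π : ℂ))‖ = (2*π)⁻¹ := by
    rw [norm_div, norm_one, norm_mul]
    simp [Complex.norm_real, abs_of_pos Real.pi_pos, one_div]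
  set K : ℝ := (2*π)⁻¹ * ∫ t in (0:ℝ)..(2*π), |f t| with hK
  have hKnn : 0 ≤ K := by
    apply mul_nonneg (by positivity)
    exact intervalIntegral.integral_nonneg (le_of_lt hπ) (fun t _ => abs_nonneg _)
  have hcK : ∀ j : ℤ, ‖c j‖ ≤ K := by
    intro j
    rw [hc, hK]
    simp only
    rw [norm_mul, hn2π]
    have hle : ‖∫ t in (0:ℝ)..(2*π), (f t : ℂ) * Complex.exp (-Complex.I * j * t)‖
        ≤ ∫ t in (0:ℝ)..(2*π), |f t| := by
      calc ‖∫ t in (0:ℝ)..(2*π), (f t : ℂ) * Complex.exp (-Complex.I * j * t)‖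
          ≤ ∫ t in (0:ℝ)..(2*π), ‖(f t : ℂ) * Complex.exp (-Complex.I * j * t)‖ :=
            intervalIntegral.norm_integral_le_integral_norm (le_of_lt hπ)
        _ = ∫ t in (0:ℝ)..(2*π), |f t| := by
            refine intervalIntegral.integral_congr fun t _ => ?_
            rw [norm_mul, norm_exp_neg_I_int_real, mul_one, Complex.norm_real, Real.norm_eq_abs]
    exact mul_le_mul_of_nonneg_left hle (by positivity)
  -- holomorphy on the strip
  have hSopen : IsOpen {z : ℂ | |z.im| < ε} :=
    isOpen_Iio.preimage (_root_.continuous_abs.comp Complex.continuous_im)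
  have hFdiff : DifferentiableOn ℂ
      (fun z : ℂ => ∑' j : ℤ, c j * Complex.exp (Complex.I * j * z) / (Real.cosh (ε * j) : ℂ))
      {z : ℂ | |z.im| < ε} := by
    intro z₀ hz₀
    have hz : |z₀.im| < ε := hz₀
    set δ : ℝ := (|z₀.im| + ε)/2 with hδ
    have h1 : |z₀.im| < δ := by rw [hδ]; linarith
    have h2 : δ < ε := by rw [hδ]; linarith
    have h0 : 0 ≤ δ := by rw [hδ]; have := abs_nonneg z₀.im; linarith
    have hUopen : IsOpen {z : ℂ | |z.im| < δ} :=
      isOpen_Iio.preimage (_root_.continuous_abs.comp Complex.continuous_im)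
    apply DifferentiableAt.differentiableWithinAt
    have hsum_u : Summable (fun j : ℤ =>
        K * (Real.exp (δ * |(j:ℝ)|) * (2 * Real.exp (-ε * |(j:ℝ)|)))) := by
      have heq : ∀ j : ℤ, Real.exp (δ * |(j:ℝ)|) * (2 * Real.exp (-ε * |(j:ℝ)|))
          = 2 * Real.exp (-(ε - δ) * |(j:ℝ)|) := by
        intro j
        rw [mul_left_comm, ← Real.exp_add]
        congr 2
        ring
      apply Summable.mul_left
      apply Summable.congr (((summable_exp_neg_mul_abs_int (by linarith : 0 < ε - δ)).mul_left 2))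
      exact fun j => (heq j).symm
    have hall : ∀ j : ℤ, DifferentiableOn ℂ
        (fun z : ℂ => c j * Complex.exp (Complex.I * j * z) / (Real.cosh (ε * j) : ℂ))
        {z : ℂ | |z.im| < δ} := by
      intro j
      apply Differentiable.differentiableOn
      apply Differentiable.div_const
      exact (differentiable_const _).mul
        (Complex.differentiable_exp.comp ((differentiable_const _).mul differentiable_id))
    have hbound : ∀ j : ℤ, ∀ w ∈ {z : ℂ | |z.im| < δ},
        ‖c j * Complex.exp (Complex.I * j * w) / (Real.cosh (ε * j) : ℂ)‖
          ≤ K * (Real.exp (δ * |(j:ℝ)|) * (2 * Real.exp (-ε * |(j:ℝ)|))) := by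
      intro j w hw
      have hw' : |w.im| < δ := hw
      rw [norm_div, norm_mul, norm_exp_I_int, Complex.norm_real, Real.norm_eq_abs,
        abs_of_pos (Real.cosh_pos _), div_eq_mul_inv, mul_assoc]
      have he1 : Real.exp (-(j:ℝ) * w.im) ≤ Real.exp (δ * |(j:ℝ)|) := by
        apply Real.exp_le_exp.mpr
        calc -(j:ℝ) * w.im ≤ |(-(j:ℝ)) * w.im| := le_abs_self _
          _ = |(j:ℝ)| * |w.im| := by rw [abs_mul, abs_neg]
          _ ≤ |(j:ℝ)| * δ := mul_le_mul_of_nonneg_left (le_of_lt hw') (abs_nonneg _)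
          _ = δ * |(j:ℝ)| := mul_comm _ _
      exact mul_le_mul (hcK j)
        (mul_le_mul he1 (inv_cosh_le hε j) (by positivity) (by positivity))
        (by positivity) hKnn
    have hD := Complex.differentiableOn_tsum_of_summable_norm hsum_u hall hUopen hbound
    exact hD.differentiableAt (hUopen.mem_nhds h1)
  refine ⟨part1, fun z : ℂ => ∑' j : ℤ, c j * Complex.exp (Complex.I * j * z)
      / (Real.cosh (ε * j) : ℂ), hFdiff, fun x => by rw [part1 x], fun x => ?_⟩
  have hmem : (↑x : ℂ) ∈ {z : ℂ | |z.im| < ε} := by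
    simp only [Set.mem_setOf_eq, Complex.ofReal_im, abs_zero]
    exact hε
  have hA : AnalyticAt ℂ
      (fun z : ℂ => ∑' j : ℤ, c j * Complex.exp (Complex.I * j * z) / (Real.cosh (ε * j) : ℂ))
      (↑x : ℂ) := hFdiff.analyticAt (hSopen.mem_nhds hmem)
  exact (hA.restrictScalars (𝕜 := ℝ)).comp (Complex.ofRealCLM.analyticAt x)
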